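/- Let X be a Hausdorff topological space and κ an infinite cardinal with χ(X) ≤ κ (every point has a neighbourhood base of size ≤ κ) and pwL_c(X) ≤ κ. Then |X| ≤ 2^κ. -/

import Mathlib

open Set Cardinal

universe u


noncomputable def ordIter {X : Type u} (step : Set X → Set X) (o : Ordinal.{u}) : Set X :=
  step (⋃ p : {o' : Ordinal.{u} // o' < o}, ordIter step p.1)
termination_by o
decreasing_by exact p.2

theorem ordIter_eq {X : Type u} (step : Set X → Set X) (o : Ordinal.{u}) :
    ordIter step o = step (⋃ p : {o' : Ordinal.{u} // o' < o}, ordIter step p.1) := by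
  rw [ordIter]

theorem ordIter_mono {X : Type u} {step : Set X → Set X} (hsub : ∀ A, A ⊆ step A)
    {o' o : Ordinal.{u}} (h : o' < o) : ordIter step o' ⊆ ordIter step o := by
  rw [ordIter_eq step o]
  exact (subset_iUnion (fun p : {o'' : Ordinal // o'' < o} => ordIter step p.1) ⟨o', h⟩).trans
    (hsub _)

theorem mk_iUnion_lt_le {X : Type u} (o : Ordinal.{u}) (f : Ordinal.{u} → Set X)
    (c : Cardinal.{u}) (hc : ∀ o' < o, #(f o') ≤ c) :
    #(⋃ p : {o' : Ordinal.{u} // o' < o}, f p.1) ≤ o.card * c := by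
  have heq : (⋃ p : {o' : Ordinal.{u} // o' < o}, f p.1) = ⋃ i : o.ToType, f ((Ordinal.ToType.mk (o := o)).symm i).1 := by
    ext x
    simp only [mem_iUnion]
    constructor
    · rintro ⟨p, hp⟩
      refine ⟨(Ordinal.ToType.mk (o := o)) ⟨p.1, p.2⟩, ?_⟩
      rw [OrderIso.symm_apply_apply]
      exact hp
    · rintro ⟨i, hi⟩
      exact ⟨⟨((Ordinal.ToType.mk (o := o)).symm i).1, ((Ordinal.ToType.mk (o := o)).symm i).2⟩, hi⟩
  rw [heq]
  calc #(⋃ i : o.ToType, f ((Ordinal.ToType.mk (o := o)).symm i).1) ≤ Cardinal.sum (fun i : o.ToType => #(f ((Ordinal.ToType.mk (o := o)).symm i).1)) :=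
        mk_iUnion_le_sum_mk
    _ ≤ Cardinal.sum (fun _ : o.ToType => c) :=
        Cardinal.sum_le_sum _ _ (fun i => hc _ ((Ordinal.ToType.mk (o := o)).symm i).2)
    _ = #o.ToType * c := Cardinal.sum_const' _ _
    _ = o.card * c := by rw [Cardinal.mk_toType]

theorem tight_aux {X : Type u} [TopologicalSpace X] {κ : Cardinal.{u}}
    (B : X → Set (Set X)) (hB1 : ∀ x, #(B x) ≤ κ)
    (hB2 : ∀ x, ∀ U ∈ B x, IsOpen U ∧ x ∈ U)
    (hB3 : ∀ x, ∀ V : Set X, IsOpen V → x ∈ V → ∃ U ∈ B x, U ⊆ V)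
    (A : Set X) (x : X) (hx : x ∈ closure A) :
    ∃ S : Set X, S ⊆ A ∧ #S ≤ κ ∧ x ∈ closure S := by
  have hmeet : ∀ U : ↥(B x), ∃ a, a ∈ U.1 ∩ A := by
    rintro ⟨U, hU⟩
    obtain ⟨hUo, hxU⟩ := hB2 x U hU
    exact mem_closure_iff.1 hx U hUo hxU
  choose g hg using hmeet
  refine ⟨range g ∩ A, inter_subset_right, ?_, ?_⟩
  · exact (mk_le_mk_of_subset inter_subset_left).trans (mk_range_le.trans (hB1 x))
  · rw [mem_closure_iff]
    intro V hV hxV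
    obtain ⟨U, hU, hUV⟩ := hB3 x V hV hxV
    exact ⟨g ⟨U, hU⟩, hUV (hg ⟨U, hU⟩).1, ⟨mem_range_self _, (hg ⟨U, hU⟩).2⟩⟩

theorem small_closure {X : Type u} [TopologicalSpace X] [T2Space X] {κ : Cardinal.{u}}
    (hκ : ℵ₀ ≤ κ)
    (B : X → Set (Set X)) (hB1 : ∀ x, #(B x) ≤ κ)
    (hB2 : ∀ x, ∀ U ∈ B x, IsOpen U ∧ x ∈ U)
    (hB3 : ∀ x, ∀ V : Set X, IsOpen V → x ∈ V → ∃ U ∈ B x, U ⊆ V)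
    (S : Set X) (hS : #S ≤ κ) : #(closure S) ≤ 2 ^ κ := by
  have hmemT : ∀ x : X, ((fun U => U ∩ S) '' (B x)) ⊆ 𝒫 S ∧ #((fun U => U ∩ S) '' (B x)) ≤ κ := by
    intro x
    constructor
    · rintro T ⟨U, _, rfl⟩
      exact inter_subset_right
    · exact mk_image_le.trans (hB1 x)
  have key : #(closure S) ≤ #{T : Set (Set X) // T ⊆ 𝒫 S ∧ #T ≤ κ} := by
    refine mk_le_of_injective (f := fun x : ↥(closure S) =>
      ⟨(fun U => U ∩ S) '' (B x.1), (hmemT x.1).1, (hmemT x.1).2⟩) ?_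
    rintro ⟨x, hx⟩ ⟨y, hy⟩ hxy
    have hxy' : (fun U => U ∩ S) '' (B x) = (fun U => U ∩ S) '' (B y) :=
      congrArg Subtype.val hxy
    by_contra hne
    have hne' : x ≠ y := fun h => hne (Subtype.ext h)
    obtain ⟨U₀, W₀, hU₀, hW₀, hxU₀, hyW₀, hd⟩ := t2_separation hne'
    obtain ⟨U, hU, hUsub⟩ := hB3 x U₀ hU₀ hxU₀
    have h1 : U ∩ S ∈ (fun U => U ∩ S) '' (B y) := hxy' ▸ mem_image_of_mem _ hU
    obtain ⟨V', hV', hV'eq⟩ := h1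
    obtain ⟨hV'o, hyV'⟩ := hB2 y V' hV'
    obtain ⟨V'', hV'', hV''sub⟩ := hB3 y (W₀ ∩ V') (hW₀.inter hV'o) ⟨hyW₀, hyV'⟩
    have h2 : V'' ∩ S ∈ (fun U => U ∩ S) '' (B x) := hxy'.symm ▸ mem_image_of_mem _ hV''
    obtain ⟨U'', hU'', hU''eq⟩ := h2
    obtain ⟨hU''o, hxU''⟩ := hB2 x U'' hU''
    obtain ⟨s, hs⟩ := mem_closure_iff.1 hx U'' hU''o hxU''
    have hsV : s ∈ V'' ∩ S := by
      have : s ∈ U'' ∩ S := hs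
      rwa [show U'' ∩ S = V'' ∩ S from hU''eq] at this
    have hsW : s ∈ W₀ := (hV''sub hsV.1).1
    have hsU : s ∈ U₀ := by
      have hsV' : s ∈ V' ∩ S := ⟨(hV''sub hsV.1).2, hsV.2⟩
      rw [show V' ∩ S = U ∩ S from hV'eq] at hsV'
      exact hUsub hsV'.1
    exact Set.disjoint_left.mp hd hsU hsW
  refine key.trans ((mk_bounded_subset_le (𝒫 S) κ).trans ?_)
  have h1 : #(𝒫 S : Set (Set X)) ≤ 2 ^ κ := by
    rw [mk_powerset]
    exact power_le_power_left two_ne_zero hS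
  have h2 : max #(𝒫 S : Set (Set X)) ℵ₀ ≤ 2 ^ κ :=
    max_le h1 (hκ.trans (le_trans (le_of_lt (cantor κ)) le_rfl))
  calc (max #(𝒫 S : Set (Set X)) ℵ₀) ^ κ ≤ (2 ^ κ) ^ κ := power_le_power_right h2
    _ = 2 ^ (κ * κ) := by rw [← power_mul]
    _ = 2 ^ κ := by rw [mul_eq_self hκ]

theorem med_closure {X : Type u} [TopologicalSpace X] [T2Space X] {κ : Cardinal.{u}}
    (hκ : ℵ₀ ≤ κ)
    (B : X → Set (Set X)) (hB1 : ∀ x, #(B x) ≤ κ)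
    (hB2 : ∀ x, ∀ U ∈ B x, IsOpen U ∧ x ∈ U)
    (hB3 : ∀ x, ∀ V : Set X, IsOpen V → x ∈ V → ∃ U ∈ B x, U ⊆ V)
    (A : Set X) (hA : #A ≤ 2 ^ κ) : #(closure A) ≤ 2 ^ κ := by
  have hsub : closure A ⊆ ⋃ S : ↥{S : Set X | S ⊆ A ∧ #S ≤ κ}, closure S.1 := by
    intro x hx
    obtain ⟨S, hSA, hSκ, hxS⟩ := tight_aux B hB1 hB2 hB3 A x hx
    exact mem_iUnion.2 ⟨⟨S, hSA, hSκ⟩, hxS⟩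
  have hcount : #{S : Set X | S ⊆ A ∧ #S ≤ κ} ≤ 2 ^ κ := by
    refine (mk_bounded_subset_le A κ).trans ?_
    have h2 : max #A ℵ₀ ≤ 2 ^ κ := max_le hA (hκ.trans (le_of_lt (cantor κ)))
    calc (max #A ℵ₀) ^ κ ≤ (2 ^ κ) ^ κ := power_le_power_right h2
      _ = 2 ^ (κ * κ) := by rw [← power_mul]
      _ = 2 ^ κ := by rw [mul_eq_self hκ]
  calc #(closure A) ≤ #(⋃ S : ↥{S : Set X | S ⊆ A ∧ #S ≤ κ}, closure S.1) :=
        mk_le_mk_of_subset hsub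
    _ ≤ Cardinal.sum (fun S : ↥{S : Set X | S ⊆ A ∧ #S ≤ κ} => #(closure S.1)) :=
        mk_iUnion_le_sum_mk
    _ ≤ Cardinal.sum (fun _ : ↥{S : Set X | S ⊆ A ∧ #S ≤ κ} => 2 ^ κ) :=
        Cardinal.sum_le_sum _ _ (fun S => small_closure hκ B hB1 hB2 hB3 S.1 S.2.2)
    _ = #{S : Set X | S ⊆ A ∧ #S ≤ κ} * 2 ^ κ := Cardinal.sum_const' _ _
    _ ≤ 2 ^ κ * 2 ^ κ := mul_le_mul_left hcount _
    _ = 2 ^ κ := by rw [← power_add, add_eq_self hκ]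

/-- For every Hausdorff space `X`, `|X| ≤ 2 ^ (pwL_c(X) ⬝ χ(X))`. -/
theorem card_le_two_pow_pwLc_chi {X : Type u} [TopologicalSpace X] [T2Space X]
    (κ : Cardinal.{u}) (hκ : ℵ₀ ≤ κ)
    (hχ : ∀ x : X, ∃ B : Set (Set X), #B ≤ κ ∧
      (∀ U ∈ B, IsOpen U ∧ x ∈ U) ∧ ∀ V : Set X, IsOpen V → x ∈ V → ∃ U ∈ B, U ⊆ V)
    (hpwLc : ∀ F : Set X, IsClosed F → ∀ (I : Type u) (𝒰 : I → Set (Set X)),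
      (∀ i, ∀ U ∈ 𝒰 i, IsOpen U) → F ⊆ ⋃₀ (⋃ i, 𝒰 i) →
      ∃ 𝒱 : I → Set (Set X), (∀ i, 𝒱 i ⊆ 𝒰 i ∧ #(𝒱 i) ≤ κ) ∧
        F ⊆ ⋃ i, closure (⋃₀ 𝒱 i)) :
    #X ≤ 2 ^ κ := by
  rcases isEmpty_or_nonempty X with hX | hX
  · rw [mk_eq_zero X]; exact zero_le
  classical
  have hκ2 : ℵ₀ ≤ 2 ^ κ := hκ.trans (cantor κ).le
  have hpow : ∀ c : Cardinal.{u}, c ≤ 2 ^ κ → (max c ℵ₀) ^ κ ≤ 2 ^ κ := by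
    intro c hc
    calc (max c ℵ₀) ^ κ ≤ (2 ^ κ) ^ κ := power_le_power_right (max_le hc hκ2)
      _ = 2 ^ (κ * κ) := by rw [← power_mul]
      _ = 2 ^ κ := by rw [mul_eq_self hκ]
  have h2κ : (2:Cardinal.{u}) ^ κ * 2 ^ κ = 2 ^ κ := mul_eq_self hκ2
  choose B hB1 hB2 hB3 using hχ
  -- separation data
  have hsep : ∀ p x : X, ∃ Vx Wx : Set X, x ≠ p →
      Vx ∈ B x ∧ Wx ∈ B p ∧ Vx ∩ Wx = ∅ := by
    intro p x
    by_cases h : x ≠ p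
    · obtain ⟨U₀, W₀, hU₀, hW₀, hxU₀, hpW₀, hd⟩ := t2_separation h
      obtain ⟨Vx, hV, hVsub⟩ := hB3 x U₀ hU₀ hxU₀
      obtain ⟨Wx, hW, hWsub⟩ := hB3 p W₀ hW₀ hpW₀
      refine ⟨Vx, Wx, fun _ => ⟨hV, hW, ?_⟩⟩
      apply eq_empty_iff_forall_notMem.2
      rintro z ⟨hz1, hz2⟩
      exact Set.disjoint_left.mp hd (hVsub hz1) (hWsub hz2)
    · exact ⟨∅, ∅, fun h' => absurd h' h⟩
  choose V W hVW using hsep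
  -- machinery
  set BigB : Set X → Set (Set X) := fun A => ⋃ x : ↥A, B x.1 with hBigB
  set Cov : Set (Set (Set X)) → Set X := fun 𝒟 => ⋃ D : ↥𝒟, closure (⋃₀ D.1) with hCov
  set Good : Set X → Set (Set (Set (Set X))) :=
    fun A => {𝒟 | 𝒟 ⊆ {D : Set (Set X) | D ⊆ BigB A ∧ #D ≤ κ} ∧ #𝒟 ≤ κ} with hGood
  have hwitex : ∀ 𝒟 : Set (Set (Set X)), ∃ w : X, (Cov 𝒟)ᶜ.Nonempty → w ∈ (Cov 𝒟)ᶜ := by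
    intro 𝒟
    by_cases h : (Cov 𝒟)ᶜ.Nonempty
    · exact ⟨h.choose, fun _ => h.choose_spec⟩
    · exact ⟨Classical.arbitrary X, fun h' => absurd h' h⟩
  choose wit hwit using hwitex
  set step : Set X → Set X := fun A => closure A ∪ (wit '' Good A) with hstep
  have hsub : ∀ A : Set X, A ⊆ step A := fun A => subset_closure.trans subset_union_left
  have hstepcard : ∀ A : Set X, #A ≤ 2 ^ κ → #(step A) ≤ 2 ^ κ := by
    intro A hA
    have hBigBcard : #(BigB A) ≤ 2 ^ κ := by
      calc #(BigB A) ≤ Cardinal.sum (fun x : ↥A => #(B x.1)) := mk_iUnion_le_sum_mk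
        _ ≤ Cardinal.sum (fun _ : ↥A => κ) := Cardinal.sum_le_sum _ _ (fun x => hB1 x.1)
        _ = #A * κ := Cardinal.sum_const' _ _
        _ ≤ 2 ^ κ * 2 ^ κ := mul_le_mul' hA (cantor κ).le
        _ = 2 ^ κ := h2κ
    have h𝔇 : #{D : Set (Set X) | D ⊆ BigB A ∧ #D ≤ κ} ≤ 2 ^ κ :=
      (mk_bounded_subset_le (BigB A) κ).trans (hpow _ hBigBcard)
    have hGoodcard : #(Good A) ≤ 2 ^ κ :=
      (mk_bounded_subset_le {D : Set (Set X) | D ⊆ BigB A ∧ #D ≤ κ} κ).trans (hpow _ h𝔇)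
    calc #(step A) ≤ #(closure A) + #(wit '' Good A) := mk_union_le _ _
      _ ≤ 2 ^ κ + 2 ^ κ :=
          add_le_add (med_closure hκ B hB1 hB2 hB3 A hA) (mk_image_le.trans hGoodcard)
      _ = 2 ^ κ := add_eq_self hκ2
  -- the iteration
  set Λ : Ordinal.{u} := (Order.succ κ).ord with hΛdef
  have hreg : (Order.succ κ).IsRegular := isRegular_succ hκ
  have hΛlim : Order.IsSuccLimit Λ := Cardinal.isSuccLimit_ord (hκ.trans (Order.le_succ κ))
  have hcard : ∀ o : Ordinal.{u}, o ≤ Λ → #(ordIter step o) ≤ 2 ^ κ := by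
    intro o
    induction o using Ordinal.induction with
    | h o IH =>
      intro ho
      rw [ordIter_eq]
      apply hstepcard
      have hocard : o.card ≤ 2 ^ κ := by
        calc o.card ≤ Λ.card := Ordinal.card_le_card ho
          _ = Order.succ κ := card_ord _
          _ ≤ 2 ^ κ := Order.succ_le_of_lt (cantor κ)
      calc #(⋃ p : {o' : Ordinal.{u} // o' < o}, ordIter step p.1) ≤ o.card * (2 ^ κ) :=
            mk_iUnion_lt_le o (ordIter step) _
              (fun o' ho' => IH o' ho' (le_of_lt (ho'.trans_le ho)))
        _ ≤ 2 ^ κ * 2 ^ κ := mul_le_mul_left hocard _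
        _ = 2 ^ κ := h2κ
  set F : Set X := ⋃ p : {o' : Ordinal.{u} // o' < Λ}, ordIter step p.1 with hF
  have hFsubA : ∀ o, o < Λ → ordIter step o ⊆ F := fun o ho =>
    subset_iUnion (fun p : {o' : Ordinal.{u} // o' < Λ} => ordIter step p.1) ⟨o, ho⟩
  have hsmall_in : ∀ S : Set X, S ⊆ F → #S ≤ κ → ∃ o, o < Λ ∧ S ⊆ ordIter step o := by
    intro S hSF hSκ
    have hmem : ∀ s : ↥S, ∃ o, o < Λ ∧ (s : X) ∈ ordIter step o := by
      intro s
      obtain ⟨⟨o, ho⟩, hso⟩ := mem_iUnion.1 (hSF s.2)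
      exact ⟨o, ho, hso⟩
    choose g hg1 hg2 using hmem
    refine ⟨iSup g, Cardinal.iSup_lt_ord_of_isRegular hreg (hSκ.trans_lt (Order.lt_succ κ)) hg1,
      ?_⟩
    intro s hs
    have hle : g ⟨s, hs⟩ ≤ iSup g := le_ciSup (Ordinal.bddAbove_range g) ⟨s, hs⟩
    rcases lt_or_eq_of_le hle with h | h
    · exact ordIter_mono hsub h (hg2 ⟨s, hs⟩)
    · rw [← h]; exact hg2 ⟨s, hs⟩
  have hclosureA : ∀ o, closure (ordIter step o) ⊆ ordIter step (Order.succ o) := by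
    intro o
    rw [ordIter_eq step (Order.succ o)]
    refine subset_trans ?_ subset_union_left
    exact closure_mono (subset_iUnion
      (fun p : {o' : Ordinal.{u} // o' < Order.succ o} => ordIter step p.1) ⟨o, Order.lt_succ o⟩)
  have hFclosed : IsClosed F := by
    rw [← closure_subset_iff_isClosed]
    intro x hx
    obtain ⟨S, hSF, hSκ, hxS⟩ := tight_aux B hB1 hB2 hB3 F x hx
    obtain ⟨o, hoΛ, hSA⟩ := hsmall_in S hSF hSκ
    exact hFsubA (Order.succ o) (hΛlim.succ_lt hoΛ)
      (hclosureA o (closure_mono hSA hxS))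
  -- F is everything
  have hFuniv : ∀ p : X, p ∈ F := by
    intro p
    by_contra hp
    have hxp : ∀ x ∈ F, x ≠ p := fun x hx he => hp (he ▸ hx)
    set 𝒰 : ↥(B p) → Set (Set X) :=
      fun i => {u | ∃ x, (x ∈ F ∧ x ≠ p) ∧ u = V p x ∧ W p x = i.1} with h𝒰
    have hopen : ∀ i, ∀ u ∈ 𝒰 i, IsOpen u := by
      rintro i u ⟨x, ⟨hxF, hxpne⟩, rfl, -⟩
      exact (hB2 x _ ((hVW p x hxpne).1)).1
    have hcover : F ⊆ ⋃₀ (⋃ i, 𝒰 i) := by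
      intro x hx
      have hne := hxp x hx
      obtain ⟨hV, hW, hdisj⟩ := hVW p x hne
      refine ⟨V p x, ?_, (hB2 x _ hV).2⟩
      exact mem_iUnion.2 ⟨⟨W p x, hW⟩, ⟨x, ⟨hx, hne⟩, rfl, rfl⟩⟩
    obtain ⟨𝒱, h𝒱1, h𝒱2⟩ := hpwLc F hFclosed (↥(B p)) 𝒰 hopen hcover
    have hrep : ∀ i : ↥(B p), ∀ u : ↥(𝒱 i),
        ∃ x, (x ∈ F ∧ x ≠ p) ∧ (u : Set X) = V p x ∧ W p x = i.1 :=
      fun i u => (h𝒱1 i).1 u.2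
    choose xsel hxsel using hrep
    set T : Set X := ⋃ i : ↥(B p), range (fun u : ↥(𝒱 i) => xsel i u) with hT
    have hTF : T ⊆ F := by
      intro t ht
      obtain ⟨i, hti⟩ := mem_iUnion.1 ht
      obtain ⟨u, rfl⟩ := hti
      exact (hxsel i u).1.1
    have hTκ : #T ≤ κ := by
      calc #T ≤ Cardinal.sum (fun i : ↥(B p) => #(range (fun u : ↥(𝒱 i) => xsel i u))) :=
            mk_iUnion_le_sum_mk
        _ ≤ Cardinal.sum (fun i : ↥(B p) => κ) :=
            Cardinal.sum_le_sum _ _ (fun i => mk_range_le.trans (h𝒱1 i).2)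
        _ = #(B p) * κ := Cardinal.sum_const' _ _
        _ ≤ κ * κ := mul_le_mul_left (hB1 p) _
        _ = κ := mul_eq_self hκ
    obtain ⟨σ, hσΛ, hTA⟩ := hsmall_in T hTF hTκ
    set 𝒟 : Set (Set (Set X)) := range (fun i : ↥(B p) => 𝒱 i) with h𝒟
    set M : Set X := ⋃ q : {o' : Ordinal.{u} // o' < Order.succ σ}, ordIter step q.1 with hM
    have hMA : ordIter step σ ⊆ M :=
      subset_iUnion (fun q : {o' : Ordinal.{u} // o' < Order.succ σ} => ordIter step q.1)
        ⟨σ, Order.lt_succ σ⟩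
    have hGood𝒟 : 𝒟 ∈ Good M := by
      constructor
      · rintro D ⟨i, rfl⟩
        refine ⟨?_, (h𝒱1 i).2⟩
        intro u hu
        have h := hxsel i ⟨u, hu⟩
        have hxT : xsel i ⟨u, hu⟩ ∈ T := mem_iUnion.2 ⟨i, mem_range_self _⟩
        refine mem_iUnion.2 ⟨⟨xsel i ⟨u, hu⟩, hMA (hTA hxT)⟩, ?_⟩
        have hEq : u = V p (xsel i ⟨u, hu⟩) := h.2.1
        have hB' := (hVW p (xsel i ⟨u, hu⟩) h.1.2).1
        rw [← hEq] at hB'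
        exact hB'
      · rw [h𝒟]; exact mk_range_le.trans (hB1 p)
    have hpCov : p ∈ (Cov 𝒟)ᶜ := by
      intro hmem
      obtain ⟨D, hD⟩ := mem_iUnion.1 hmem
      obtain ⟨i, hieq⟩ := D.2
      have hD1 : (D : Set (Set X)) = 𝒱 i := hieq.symm
      rw [hD1] at hD
      obtain ⟨hio, hpi⟩ := hB2 p i.1 i.2
      obtain ⟨z, hzi, hzU⟩ := mem_closure_iff.1 hD i.1 hio hpi
      obtain ⟨u, hu, hzu⟩ := hzU
      have h := hxsel i ⟨u, hu⟩
      have hEq : u = V p (xsel i ⟨u, hu⟩) := h.2.1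
      have hzV : z ∈ V p (xsel i ⟨u, hu⟩) := by rw [← hEq]; exact hzu
      have : z ∈ V p (xsel i ⟨u, hu⟩) ∩ W p (xsel i ⟨u, hu⟩) := ⟨hzV, by rw [h.2.2]; exact hzi⟩
      rw [(hVW p _ h.1.2).2.2] at this
      exact this
    have hnecov : (Cov 𝒟)ᶜ.Nonempty := ⟨p, hpCov⟩
    have hwmem : wit 𝒟 ∈ (Cov 𝒟)ᶜ := hwit 𝒟 hnecov
    have hwF : wit 𝒟 ∈ F := by
      apply hFsubA (Order.succ σ) (hΛlim.succ_lt hσΛ)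
      rw [ordIter_eq step (Order.succ σ), ← hM]
      exact Set.mem_union_right _ (mem_image_of_mem wit hGood𝒟)
    apply hwmem
    obtain ⟨i, hi⟩ := mem_iUnion.1 (h𝒱2 hwF)
    exact mem_iUnion.2 ⟨⟨𝒱 i, ⟨i, rfl⟩⟩, hi⟩
  have hFu : F = Set.univ := Set.eq_univ_iff_forall.2 hFuniv
  calc #X = #F := by rw [hFu, Cardinal.mk_univ]
    _ ≤ Λ.card * 2 ^ κ := mk_iUnion_lt_le Λ (ordIter step) _ (fun o' ho' => hcard o' ho'.le)
    _ ≤ 2 ^ κ * 2 ^ κ := by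
        refine mul_le_mul_left ?_ _
        rw [hΛdef, card_ord]
        exact Order.succ_le_of_lt (cantor κ)
    _ = 2 ^ κ := h2κ
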